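/- Let D, M, T be strictly positive real numbers and let A be the 2×2 real matrix with rows (-D/M, 1/M) and (-T, 0). Then for every initial vector x₀ ∈ ℝ², the solution exp(t•A) applied to x₀ of the linear system ẋ = A x tends to the zero vector as t → ∞ (asymptotic stability of the origin). -/

import Mathlib

open Filter NormedSpace

attribute [local instance] Matrix.linftyOpNormedRing Matrix.linftyOpNormedAlgebra

set_option maxHeartbeats 2000000 in
private lemma stmt_2_aux (a b T : ℝ) (ha : 0 < a) (hb : 0 < b) (hT : 0 < T)
    (x₀ : Fin 2 → ℝ) :
    Filter.Tendsto
      (fun t : ℝ =>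
        (NormedSpace.exp (t • (!![-a, b; -T, 0] : Matrix (Fin 2) (Fin 2) ℝ))).mulVec x₀)
      Filter.atTop (nhds 0) := by
  set A : Matrix (Fin 2) (Fin 2) ℝ := !![-a, b; -T, 0] with hAdef
  set x : ℝ → Fin 2 → ℝ := fun t => (exp (t • A)).mulVec x₀ with hxdef
  -- derivatives of components
  have hderiv : ∀ (i : Fin 2) (t : ℝ),
      HasDerivAt (fun s => x s i) (A.mulVec (x t) i) t := by
    intro i t
    have h1 : HasDerivAt (fun s : ℝ => exp (s • A)) (A * exp (t • A)) t :=
      hasDerivAt_exp_smul_const' A t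
    let lm : Matrix (Fin 2) (Fin 2) ℝ →ₗ[ℝ] ℝ :=
      { toFun := fun B => B.mulVec x₀ i
        map_add' := fun B C => by simp [Matrix.add_mulVec]
        map_smul' := fun r B => by simp [Matrix.smul_mulVec] }
    have h2 := lm.toContinuousLinearMap.hasFDerivAt.comp_hasDerivAt t h1
    have h3 : (A.mulVec (x t)) i = lm (A * exp (t • A)) := by
      simp only [lm, LinearMap.coe_mk, AddHom.coe_mk, hxdef, Matrix.mulVec_mulVec]
    rw [h3]
    exact h2
  set x1 : ℝ → ℝ := fun t => x t 0 with hx1def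
  set x2 : ℝ → ℝ := fun t => x t 1 with hx2def
  have hm0 : ∀ v : Fin 2 → ℝ, A.mulVec v 0 = -a * v 0 + b * v 1 := by
    intro v
    simp [hAdef, Matrix.mulVec, dotProduct, Fin.sum_univ_two]
  have hm1 : ∀ v : Fin 2 → ℝ, A.mulVec v 1 = -T * v 0 := by
    intro v
    simp [hAdef, Matrix.mulVec, dotProduct, Fin.sum_univ_two]
  have h1d : ∀ t, HasDerivAt x1 (-a * x1 t + b * x2 t) t := by
    intro t
    have := hderiv 0 t
    rwa [hm0] at this
  have h2d : ∀ t, HasDerivAt x2 (-T * x1 t) t := by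
    intro t
    have := hderiv 1 t
    rwa [hm1] at this
  clear hderiv hm0 hm1 hxdef hAdef
  clear_value x A
  -- Lyapunov function
  set ε : ℝ := min (a / (2 * T)) (Real.sqrt (b / T)) with hεdef
  have hε : 0 < ε := lt_min (by positivity) (Real.sqrt_pos.2 (by positivity))
  have hε1 : ε * T ≤ a / 2 := by
    have h := min_le_left (a / (2 * T)) (Real.sqrt (b / T))
    rw [← hεdef] at h
    have := mul_le_mul_of_nonneg_right h hT.le
    calc ε * T ≤ a / (2 * T) * T := this
      _ = a / 2 := by field_simp
  have hε2 : ε ^ 2 ≤ b / T := by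
    have h := min_le_right (a / (2 * T)) (Real.sqrt (b / T))
    rw [← hεdef] at h
    have := pow_le_pow_left₀ hε.le h 2
    rwa [Real.sq_sqrt (by positivity)] at this
  set β : ℝ := (b + ε * a) / T with hβdef
  have hβ : 0 < β := by positivity
  have hβε : ε ^ 2 < β := by
    have : b / T < β := by
      rw [hβdef, div_lt_div_iff₀ hT hT]
      nlinarith [mul_pos (mul_pos hε ha) hT]
    linarith
  set g : ℝ → ℝ := fun t => x1 t ^ 2 - 2 * ε * (x1 t * x2 t) + β * x2 t ^ 2 with hgdef
  have hgd : ∀ t, HasDerivAt g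
      (-(2 * (a - ε * T)) * x1 t ^ 2 - 2 * ε * b * x2 t ^ 2) t := by
    intro t
    have H := (((h1d t).pow 2).sub (((h1d t).mul (h2d t)).const_mul (2 * ε))).add
      (((h2d t).pow 2).const_mul β)
    refine H.congr_deriv ?_
    rw [hβdef]
    field_simp
    ring
  have hgpos : ∀ t, 0 ≤ g t := by
    intro t
    simp only [hgdef]
    nlinarith [sq_nonneg (x1 t - ε * x2 t),
      mul_nonneg (sub_nonneg.2 hβε.le) (sq_nonneg (x2 t))]
  set K : ℝ := 1 + ε + β with hKdef
  have hK : 0 < K := by positivity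
  set c : ℝ := min a (2 * ε * b) / K with hcdef
  have hc : 0 < c := by
    apply div_pos _ hK
    exact lt_min ha (by positivity)
  have hcK : c * K = min a (2 * ε * b) := div_mul_cancel₀ _ hK.ne'
  have hKg : ∀ t, g t ≤ K * (x1 t ^ 2 + x2 t ^ 2) := by
    intro t
    have h2 : -(2 * ε * (x1 t * x2 t)) ≤ ε * (x1 t ^ 2 + x2 t ^ 2) := by
      nlinarith [sq_nonneg (x1 t + x2 t), hε.le]
    rw [hKdef]
    simp only [hgdef]
    nlinarith [sq_nonneg (x1 t), sq_nonneg (x2 t), mul_nonneg hβ.le (sq_nonneg (x1 t)),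
      mul_nonneg hε.le (sq_nonneg (x1 t)), mul_nonneg hε.le (sq_nonneg (x2 t))]
  have key : ∀ t, (-(2 * (a - ε * T)) * x1 t ^ 2 - 2 * ε * b * x2 t ^ 2) + c * g t ≤ 0 := by
    intro t
    have h1 : c * g t ≤ c * (K * (x1 t ^ 2 + x2 t ^ 2)) :=
      mul_le_mul_of_nonneg_left (hKg t) hc.le
    have h2 : c * (K * (x1 t ^ 2 + x2 t ^ 2)) = min a (2 * ε * b) * (x1 t ^ 2 + x2 t ^ 2) := by
      rw [← mul_assoc, hcK]
    have e0 : min a (2 * ε * b) * (x1 t ^ 2 + x2 t ^ 2)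
        = min a (2 * ε * b) * x1 t ^ 2 + min a (2 * ε * b) * x2 t ^ 2 := mul_add _ _ _
    have e1 : min a (2 * ε * b) * x1 t ^ 2 ≤ a * x1 t ^ 2 :=
      mul_le_mul_of_nonneg_right (min_le_left _ _) (sq_nonneg _)
    have e2 : min a (2 * ε * b) * x2 t ^ 2 ≤ 2 * ε * b * x2 t ^ 2 :=
      mul_le_mul_of_nonneg_right (min_le_right _ _) (sq_nonneg _)
    have e3 : a * x1 t ^ 2 ≤ 2 * (a - ε * T) * x1 t ^ 2 :=
      mul_le_mul_of_nonneg_right (by linarith) (sq_nonneg _)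
    nlinarith [h1, h2, e0, e1, e2, e3]
  -- decay of g
  have hbound : ∀ t : ℝ, 0 ≤ t → g t ≤ g 0 * Real.exp (-(c * t)) := by
    have hh : ∀ t, HasDerivAt (fun s => g s * Real.exp (c * s))
        (((-(2 * (a - ε * T)) * x1 t ^ 2 - 2 * ε * b * x2 t ^ 2) + c * g t)
          * Real.exp (c * t)) t := by
      intro t
      have hexp : HasDerivAt (fun s : ℝ => Real.exp (c * s)) (Real.exp (c * t) * c) t := by
        have := ((hasDerivAt_id t).const_mul c).exp
        simpa using this
      have := (hgd t).mul hexp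
      refine this.congr_deriv ?_
      ring
    have hanti : Antitone (fun s => g s * Real.exp (c * s)) := by
      apply antitone_of_deriv_nonpos
      · exact fun t => (hh t).differentiableAt
      · intro t
        rw [(hh t).deriv]
        exact mul_nonpos_of_nonpos_of_nonneg (key t) (Real.exp_nonneg _)
    intro t ht
    have := hanti ht
    simp only [mul_zero, Real.exp_zero, mul_one] at this
    rw [Real.exp_neg, mul_comm (g 0), ← div_eq_inv_mul, le_div_iff₀ (Real.exp_pos _)]
    exact this
  have hgto : Tendsto g atTop (nhds 0) := by
    apply squeeze_zero' (Eventually.of_forall hgpos)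
      ((eventually_ge_atTop (0 : ℝ)).mono fun t ht => hbound t ht)
    have h1 : Tendsto (fun t : ℝ => c * t) atTop atTop :=
      Tendsto.const_mul_atTop hc tendsto_id
    have h2 := (Real.tendsto_exp_neg_atTop_nhds_zero.comp h1).const_mul (g 0)
    simpa using h2
  -- extract limits of components
  have hsq : ∀ (u : ℝ → ℝ), Tendsto (fun t => u t ^ 2) atTop (nhds 0) →
      Tendsto u atTop (nhds 0) := by
    intro u hu
    rw [tendsto_zero_iff_abs_tendsto_zero]
    have := (Real.continuous_sqrt.tendsto 0).comp hu
    simp only [Function.comp_def, Real.sqrt_sq_eq_abs, Real.sqrt_zero] at this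
    exact this
  have hx2to : Tendsto x2 atTop (nhds 0) := by
    apply hsq
    have hd : 0 < β - ε ^ 2 := by linarith
    apply squeeze_zero (fun t => sq_nonneg _) (g := fun t => (β - ε ^ 2)⁻¹ * g t)
    · intro t
      have hb2 : (β - ε ^ 2) * x2 t ^ 2 ≤ g t := by
        simp only [hgdef]
        nlinarith [sq_nonneg (x1 t - ε * x2 t)]
      have h5 := mul_le_mul_of_nonneg_left hb2 (inv_nonneg.2 hd.le)
      calc x2 t ^ 2 = (β - ε ^ 2)⁻¹ * ((β - ε ^ 2) * x2 t ^ 2) :=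
            (inv_mul_cancel_left₀ hd.ne' _).symm
        _ ≤ (β - ε ^ 2)⁻¹ * g t := h5
    · simpa only [mul_zero] using hgto.const_mul (β - ε ^ 2)⁻¹
  have huto : Tendsto (fun t => x1 t - ε * x2 t) atTop (nhds 0) := by
    apply hsq
    apply squeeze_zero (fun t => sq_nonneg _) (g := g)
    · intro t
      simp only [hgdef]
      nlinarith [mul_nonneg (sub_nonneg.2 hβε.le) (sq_nonneg (x2 t))]
    · exact hgto
  have hx1to : Tendsto x1 atTop (nhds 0) := by
    have := huto.add (hx2to.const_mul ε)
    have heq : (fun t => (x1 t - ε * x2 t) + ε * x2 t) = x1 := by funext t; ring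
    rw [heq] at this
    simpa only [mul_zero, add_zero] using this
  rw [tendsto_pi_nhds]
  intro i
  fin_cases i
  · exact hx1to
  · exact hx2to

theorem stmt_2 (D M T : ℝ) (hD : 0 < D) (hM : 0 < M) (hT : 0 < T) :
    ∀ x₀ : Fin 2 → ℝ,
      Filter.Tendsto
        (fun t : ℝ =>
          (NormedSpace.exp (t • (!![-D/M, 1/M; -T, 0] : Matrix (Fin 2) (Fin 2) ℝ))).mulVec x₀)
        Filter.atTop (nhds 0) := by
  intro x₀
  have := stmt_2_aux (D / M) (1 / M) T (by positivity) (by positivity) hT x₀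
  simpa [neg_div] using this
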